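/- For density operators ρ, σ, Q(ρ,σ) ≥ F(ρ,σ)², where F(ρ,σ) := ‖√ρ √σ‖₁ is the fidelity; hence if F(ρ,σ)² > t for a real t, then Q(ρ,σ) > t. -/

import Mathlib

noncomputable section
open Matrix Filter
open scoped ComplexOrder Kronecker

variable {m : Type*} [Fintype m] [DecidableEq m]

/-- `A^s` via the continuous functional calculus (with `0^s = 0` for `s ∈ (0,1)`). -/
def mpow (A : Matrix m m ℂ) (s : ℝ) : Matrix m m ℂ := cfc (fun x : ℝ => x ^ s) A

/-- Non-logarithmic quantum Chernoff divergence `Q(ρ,σ) = inf_{0<s<1} Tr(ρ^s σ^{1-s})`. -/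
def NQCD (ρ σ : Matrix m m ℂ) : ℝ :=
  ⨅ s : Set.Ioo (0:ℝ) 1, ((mpow ρ s) * (mpow σ (1 - (s : ℝ)))).trace.re

/-- Trace distance `d(ρ,σ) = (1/2) Tr |ρ - σ|`. -/
def traceDist (ρ σ : Matrix m m ℂ) : ℝ :=
  (1/2) * (cfc (fun x : ℝ => |x|) (ρ - σ)).trace.re

/-- Matrix square root via functional calculus. -/
def msqrt (A : Matrix m m ℂ) : Matrix m m ℂ := cfc Real.sqrt A

/-- Uhlmann fidelity `F(ρ,σ) = Tr √(√ρ σ √ρ)`. -/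
def fidelity (ρ σ : Matrix m m ℂ) : ℝ := (msqrt (msqrt ρ * σ * msqrt ρ)).trace.re

/-- A density operator: positive semidefinite with unit trace. -/
def IsDensity (ρ : Matrix m m ℂ) : Prop := ρ.PosSemidef ∧ ρ.trace = 1

/-- `k`-fold tensor power of a matrix. -/
def tpow {n : ℕ} (ρ : Matrix (Fin n) (Fin n) ℂ) (k : ℕ) :
    Matrix (Fin k → Fin n) (Fin k → Fin n) ℂ := fun i j => ∏ t, ρ (i t) (j t)

/-- Von Neumann entropy `H(A) = -Tr(A log A)` (natural logarithm). -/
def vnEntropy (A : Matrix m m ℂ) : ℝ := (cfc Real.negMulLog A).trace.re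

/-- Partial trace over the first (classical) factor. -/
def ptraceFst {C E : Type*} [Fintype C] [Fintype E]
    (ρ : Matrix (C × E) (C × E) ℂ) : Matrix E E ℂ :=
  fun a b => ∑ c : C, ρ (c, a) (c, b)

/-- Conditional von Neumann entropy `H(C|E) = H(CE) - H(E)`. -/
def condEnt {C E : Type*} [Fintype C] [DecidableEq C] [Fintype E] [DecidableEq E]
    (ρ : Matrix (C × E) (C × E) ℂ) : ℝ :=
  vnEntropy ρ - vnEntropy (ptraceFst ρ)

/-- The classical-quantum state `(1/2)|0⟩⟨0| ⊗ ρ0 + (1/2)|1⟩⟨1| ⊗ ρ1`. -/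
def cqState {E : Type*} [Fintype E] [DecidableEq E] (ρ0 ρ1 : Matrix E E ℂ) :
    Matrix ((Fin 2) × E) ((Fin 2) × E) ℂ :=
  fun p q => if p.1 = q.1 then (1/2 : ℂ) * (if p.1 = 0 then ρ0 p.2 q.2 else ρ1 p.2 q.2) else 0

/-- Tensor product `ρ_{m₁} ⊗ ⋯ ⊗ ρ_{m_k}` selected by a bit string `m`. -/
def tensSel {n : ℕ} (ρs : Fin 2 → Matrix (Fin n) (Fin n) ℂ) {k : ℕ} (m : Fin k → Fin 2) :
    Matrix (Fin k → Fin n) (Fin k → Fin n) ℂ := fun i j => ∏ t, (ρs (m t)) (i t) (j t)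

open Complex

set_option linter.unusedSectionVars false
set_option maxHeartbeats 1000000

private lemma cfc_spectral {A : Matrix m m ℂ} (hA : A.IsHermitian) (f : ℝ → ℝ) :
    cfc f A = (hA.eigenvectorUnitary : Matrix m m ℂ) *
      diagonal (fun i => (f (hA.eigenvalues i) : ℂ)) * star (hA.eigenvectorUnitary : Matrix m m ℂ) := by
  rw [hA.cfc_eq f, Matrix.IsHermitian.cfc]
  rfl

private lemma herm_idem_diag {E : Matrix m m ℂ} (hE : E.IsHermitian) (hEE : E * E = E) (j : m) :
    (E j j).re ≤ 1 := by
  have key : E j j = ∑ l, ((normSq (E j l) : ℝ) : ℂ) := by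
    conv_lhs => rw [← hEE]
    rw [Matrix.mul_apply]
    refine Finset.sum_congr rfl fun l _ => ?_
    rw [← hE.apply l j]
    simp [Complex.star_def, Complex.mul_conj]
  have h1 : (E j j).re = ∑ l, normSq (E j l) := by
    rw [key, Complex.re_sum]
    simp
  have h2 : normSq (E j j) ≤ ∑ l, normSq (E j l) :=
    Finset.single_le_sum (fun l _ => normSq_nonneg _) (Finset.mem_univ j)
  have h3 : normSq (E j j) = (E j j).re ^ 2 + (E j j).im ^ 2 := by
    simp [normSq_apply]; ring
  nlinarith [sq_nonneg ((E j j).im), sq_nonneg ((E j j).re - 1)]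

private lemma conj_herm_idem {E S : Matrix m m ℂ} (hE : E.IsHermitian) (hEE : E * E = E)
    (hS : S * star S = 1) :
    (star S * E * S).IsHermitian ∧ (star S * E * S) * (star S * E * S) = star S * E * S := by
  constructor
  · have hEs : star E = E := by rw [Matrix.star_eq_conjTranspose, hE.eq]
    show (star S * E * S)ᴴ = _
    rw [← Matrix.star_eq_conjTranspose]
    simp only [Matrix.star_mul, star_star, hEs, Matrix.mul_assoc]
  · have h4 : S * (star S * (E * S)) = E * S := by
      rw [← Matrix.mul_assoc, hS, Matrix.one_mul]
    calc (star S * E * S) * (star S * E * S)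
        = star S * (E * (S * (star S * (E * S)))) := by simp only [Matrix.mul_assoc]
      _ = star S * (E * (E * S)) := by rw [h4]
      _ = star S * E * S := by rw [← Matrix.mul_assoc E E S, hEE, Matrix.mul_assoc]

private lemma fid_sq_le_term (ρ σ : Matrix m m ℂ) (hρ : IsDensity ρ) (hσ : IsDensity σ)
    {s : ℝ} (hs0 : 0 < s) (hs1 : s < 1) :
    (fidelity ρ σ) ^ 2 ≤ ((mpow ρ s) * (mpow σ (1 - s))).trace.re := by
  obtain ⟨hρP, hρtr⟩ := hρ
  obtain ⟨hσP, hσtr⟩ := hσ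
  have h1 : ρ.IsHermitian := hρP.1
  have h2 : σ.IsHermitian := hσP.1
  set U : Matrix m m ℂ := (h1.eigenvectorUnitary : Matrix m m ℂ) with hUdef
  set V : Matrix m m ℂ := (h2.eigenvectorUnitary : Matrix m m ℂ) with hVdef
  set p : m → ℝ := h1.eigenvalues with hpdef
  set q : m → ℝ := h2.eigenvalues with hqdef
  have hU1 : star U * U = 1 := Matrix.mem_unitaryGroup_iff'.mp h1.eigenvectorUnitary.2
  have hU2 : U * star U = 1 := Matrix.mem_unitaryGroup_iff.mp h1.eigenvectorUnitary.2
  have hV1 : star V * V = 1 := Matrix.mem_unitaryGroup_iff'.mp h2.eigenvectorUnitary.2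
  have hV2 : V * star V = 1 := Matrix.mem_unitaryGroup_iff.mp h2.eigenvectorUnitary.2
  have hp : ∀ i, 0 ≤ p i := fun i => hρP.eigenvalues_nonneg i
  have hq : ∀ i, 0 ≤ q i := fun i => hσP.eigenvalues_nonneg i
  have hspecρ : ρ = U * diagonal (fun i => (p i : ℂ)) * star U := h1.spectral_theorem
  have hspecσ : σ = V * diagonal (fun i => (q i : ℂ)) * star V := h2.spectral_theorem
  have H : ∀ A B C D E F : Matrix m m ℂ, (A*B*C)*(D*E*F) = A*(B*(C*D)*E)*F := by
    intros; simp only [Matrix.mul_assoc]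
  have sum_one : ∀ (Wm : Matrix m m ℂ) (a : m → ℝ), star Wm * Wm = 1 →
      (Wm * diagonal (fun i => (a i : ℂ)) * star Wm).trace = ((∑ i, a i : ℝ) : ℂ) := by
    intro Wm a hW
    rw [Matrix.trace_mul_cycle, hW, Matrix.one_mul, Matrix.trace_diagonal]
    push_cast
    ring
  have hptr : ∑ i, p i = 1 := by
    have h := sum_one U p hU1
    rw [← hspecρ, hρtr] at h
    exact_mod_cast h.symm
  have hqtr : ∑ i, q i = 1 := by
    have h := sum_one V q hV1
    rw [← hspecσ, hσtr] at h
    exact_mod_cast h.symm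
  have sandwich_mul : ∀ (Wm : Matrix m m ℂ) (a b : m → ℝ), star Wm * Wm = 1 →
      (Wm * diagonal (fun i => (a i:ℂ)) * star Wm) * (Wm * diagonal (fun i => (b i:ℂ)) * star Wm)
      = Wm * diagonal (fun i => ((a i * b i : ℝ) :ℂ)) * star Wm := by
    intro Wm a b hW
    rw [H, hW, Matrix.mul_one, diagonal_mul_diagonal]
    norm_cast
  have sandwich_herm : ∀ (Wm : Matrix m m ℂ) (a : m → ℝ),
      (Wm * diagonal (fun i => (a i:ℂ)) * star Wm).IsHermitian := by
    intro Wm a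
    have hd : (diagonal (fun i => (a i:ℂ))).IsHermitian := by
      rw [Matrix.isHermitian_diagonal_iff]
      intro i
      exact Complex.conj_ofReal _
    rw [Matrix.star_eq_conjTranspose]
    exact Matrix.isHermitian_mul_mul_conjTranspose Wm hd
  have hRρ : msqrt ρ = U * diagonal (fun i => ((Real.sqrt (p i) : ℝ) : ℂ)) * star U :=
    cfc_spectral h1 _
  have hRσ : msqrt σ = V * diagonal (fun i => ((Real.sqrt (q i) : ℝ) : ℂ)) * star V :=
    cfc_spectral h2 _
  have hhρ : (msqrt ρ).IsHermitian := by rw [hRρ]; exact sandwich_herm U _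
  have hhσ : (msqrt σ).IsHermitian := by rw [hRσ]; exact sandwich_herm V _
  have hRσσ : msqrt σ * msqrt σ = σ := by
    rw [hRσ, sandwich_mul V _ _ hV1]
    have hss : ∀ i, Real.sqrt (q i) * Real.sqrt (q i) = q i := fun i => Real.mul_self_sqrt (hq i)
    simp only [hss]
    exact hspecσ.symm
  set M : Matrix m m ℂ := msqrt ρ * σ * msqrt ρ with hMdef
  have hMps : M.PosSemidef := by
    have h := hσP.mul_mul_conjTranspose_same (msqrt ρ)
    rwa [hhρ.eq] at h
  have hM3 : M.IsHermitian := hMps.1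
  set W : Matrix m m ℂ := (hM3.eigenvectorUnitary : Matrix m m ℂ) with hWdef
  set d : m → ℝ := hM3.eigenvalues with hddef
  have hW1 : star W * W = 1 := Matrix.mem_unitaryGroup_iff'.mp hM3.eigenvectorUnitary.2
  have hW2 : W * star W = 1 := Matrix.mem_unitaryGroup_iff.mp hM3.eigenvectorUnitary.2
  have hd : ∀ k, 0 ≤ d k := fun k => hMps.eigenvalues_nonneg k
  have hspecM : M = W * diagonal (fun k => (d k:ℂ)) * star W := hM3.spectral_theorem
  set X : Matrix m m ℂ := msqrt ρ * msqrt σ with hXdef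
  have hXX : X * Xᴴ = M := by
    calc X * Xᴴ = (msqrt ρ * msqrt σ) * ((msqrt σ)ᴴ * (msqrt ρ)ᴴ) := by
          rw [hXdef, Matrix.conjTranspose_mul]
      _ = msqrt ρ * (msqrt σ * msqrt σ) * msqrt ρ := by
          rw [hhσ.eq, hhρ.eq]; simp only [Matrix.mul_assoc]
      _ = M := by rw [hRσσ, hMdef, Matrix.mul_assoc]
  set Y : Matrix m m ℂ := Xᴴ * W with hYdef
  have hYY : Yᴴ * Y = diagonal (fun k => (d k:ℂ)) := by
    calc Yᴴ * Y = (Wᴴ * X) * (Xᴴ * W) := by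
          rw [hYdef, Matrix.conjTranspose_mul, Matrix.conjTranspose_conjTranspose]
      _ = Wᴴ * (X * Xᴴ) * W := by simp only [Matrix.mul_assoc]
      _ = Wᴴ * (W * diagonal (fun k => (d k:ℂ)) * star W) * W := by rw [hXX, hspecM]
      _ = diagonal (fun k => (d k:ℂ)) := by
          rw [← Matrix.star_eq_conjTranspose]
          calc star W * (W * diagonal (fun k => (d k:ℂ)) * star W) * W
              = (star W * W) * diagonal (fun k => (d k:ℂ)) * (star W * W) := by
                simp only [Matrix.mul_assoc]
            _ = diagonal (fun k => (d k:ℂ)) := by rw [hW1, Matrix.one_mul, Matrix.mul_one]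
  set g : m → ℝ := fun k => if d k = 0 then 0 else (Real.sqrt (d k))⁻¹ with hgdef
  set Φ : Matrix m m ℂ := Y * diagonal (fun k => (g k : ℂ)) with hΦdef
  set Pc : Matrix m m ℂ := diagonal (fun k => if d k = 0 then 0 else 1) with hPdef
  have hdiagg : (diagonal (fun k => (g k : ℂ)))ᴴ = diagonal (fun k => (g k : ℂ)) := by
    rw [Matrix.diagonal_conjTranspose]
    refine congrArg _ (funext fun k => ?_)
    simp [Pi.star_apply, Complex.star_def, Complex.conj_ofReal]
  have hΦΦ : Φᴴ * Φ = Pc := by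
    calc Φᴴ * Φ = diagonal (fun k => (g k : ℂ)) * (Yᴴ * Y) * diagonal (fun k => (g k : ℂ)) := by
          rw [hΦdef, Matrix.conjTranspose_mul, hdiagg]; simp only [Matrix.mul_assoc]
      _ = diagonal (fun k => (g k : ℂ)) * diagonal (fun k => (d k:ℂ)) * diagonal (fun k => (g k : ℂ)) := by
          rw [hYY]
      _ = Pc := by
          rw [diagonal_mul_diagonal, diagonal_mul_diagonal, hPdef]
          refine (Matrix.diagonal_eq_diagonal_iff).mpr fun k => ?_
          by_cases hk : d k = 0
          · simp [hgdef, hk]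
          · have hdk : 0 < d k := lt_of_le_of_ne (hd k) (Ne.symm hk)
            have hsq : Real.sqrt (d k) ≠ 0 := ne_of_gt (Real.sqrt_pos.mpr hdk)
            simp only [hgdef, if_neg hk]
            have : ((√(d k))⁻¹ : ℝ) * d k * (√(d k))⁻¹ = 1 := by
              field_simp
              rw [Real.sq_sqrt hdk.le]
            rw [← Complex.ofReal_mul, ← Complex.ofReal_mul, this, Complex.ofReal_one]
  have hΦP : Φ * Pc = Φ := by
    rw [hΦdef, hPdef, Matrix.mul_assoc, diagonal_mul_diagonal]
    refine congrArg _ ((Matrix.diagonal_eq_diagonal_iff).mpr fun k => ?_)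
    by_cases hk : d k = 0
    · simp [hgdef, hk]
    · simp [hgdef, hk]
  have hPP : Pc * Pc = Pc := by
    rw [hPdef, diagonal_mul_diagonal]
    refine (Matrix.diagonal_eq_diagonal_iff).mpr fun k => ?_
    by_cases hk : d k = 0 <;> simp [hk]
  have hPH : Pc.IsHermitian := by
    rw [hPdef, Matrix.isHermitian_diagonal_iff]
    intro k
    by_cases hk : d k = 0
    · simp only [if_pos hk]; exact star_zero ℂ
    · simp only [if_neg hk]; exact star_one ℂ
  set E : Matrix m m ℂ := Φ * Φᴴ with hEdef
  have hEH : E.IsHermitian := Matrix.isHermitian_mul_conjTranspose_self Φ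
  have hEE : E * E = E := by
    calc (Φ * Φᴴ) * (Φ * Φᴴ) = Φ * (Φᴴ * Φ) * Φᴴ := by simp only [Matrix.mul_assoc]
      _ = Φ * Pc * Φᴴ := by rw [hΦΦ]
      _ = Φ * Φᴴ := by rw [hΦP]
  set K : Matrix m m ℂ := W * Φᴴ with hKdef
  have hstarK : star K = Φ * star W := by
    rw [hKdef, Matrix.star_mul, Matrix.star_eq_conjTranspose Φᴴ, Matrix.conjTranspose_conjTranspose]
  have hKK : K * star K = W * Pc * star W := by
    rw [hKdef, hstarK]
    calc W * Φᴴ * (Φ * star W) = W * (Φᴴ * Φ) * star W := by simp only [Matrix.mul_assoc]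
      _ = W * Pc * star W := by rw [hΦΦ]
  have hKK2 : star K * K = E := by
    rw [hKdef, hstarK, hEdef]
    calc Φ * star W * (W * Φᴴ) = Φ * (star W * W) * Φᴴ := by simp only [Matrix.mul_assoc]
      _ = Φ * Φᴴ := by rw [hW1, Matrix.mul_one]
  set B : Matrix m m ℂ := star U * K * V with hBdef
  have hstarB : star B = star V * star K * U := by
    rw [hBdef, Matrix.star_mul, Matrix.star_mul, star_star]
    simp only [Matrix.mul_assoc]
  have hBB : B * star B = star U * (W * Pc * star W) * U := by
    rw [hBdef, hstarB]
    calc star U * K * V * (star V * star K * U)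
        = star U * (K * (V * star V) * star K) * U := by simp only [Matrix.mul_assoc]
      _ = star U * (K * star K) * U := by rw [hV2, Matrix.mul_one]
      _ = star U * (W * Pc * star W) * U := by rw [hKK]
  have hB2 : star B * B = star V * E * V := by
    rw [hBdef, hstarB]
    calc star V * star K * U * (star U * K * V)
        = star V * (star K * (U * star U) * K) * V := by simp only [Matrix.mul_assoc]
      _ = star V * (star K * K) * V := by rw [hU2, Matrix.mul_one]
      _ = star V * E * V := by rw [hKK2]
  have hWPW_herm : (W * Pc * star W).IsHermitian := by
    rw [Matrix.star_eq_conjTranspose]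
    exact Matrix.isHermitian_mul_mul_conjTranspose W hPH
  have hWPW_idem : (W * Pc * star W) * (W * Pc * star W) = W * Pc * star W := by
    rw [H, hW1, Matrix.mul_one, hPP]
  have hrow : ∀ i, ∑ j, normSq (B i j) ≤ 1 := by
    intro i
    have hdiag : ((B * star B) i i).re = ∑ j, normSq (B i j) := by
      rw [Matrix.mul_apply, Complex.re_sum]
      refine Finset.sum_congr rfl fun j _ => ?_
      rw [Matrix.star_apply, Complex.star_def, Complex.mul_conj]
      simp
    obtain ⟨hh, hi⟩ := conj_herm_idem hWPW_herm hWPW_idem hU2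
    have := herm_idem_diag hh hi i
    rw [← hBB] at this
    linarith [hdiag ▸ this]
  have hcol : ∀ j, ∑ i, normSq (B i j) ≤ 1 := by
    intro j
    have hdiag : ((star B * B) j j).re = ∑ i, normSq (B i j) := by
      rw [Matrix.mul_apply, Complex.re_sum]
      refine Finset.sum_congr rfl fun i _ => ?_
      rw [Matrix.star_apply, Complex.star_def, mul_comm, Complex.mul_conj]
      simp
    obtain ⟨hh, hi⟩ := conj_herm_idem hEH hEE hV2
    have := herm_idem_diag hh hi j
    rw [← hB2] at this
    linarith [hdiag ▸ this]
  have hF : fidelity ρ σ = ∑ k, Real.sqrt (d k) := by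
    have hmsq : msqrt M = W * diagonal (fun k => ((Real.sqrt (d k) : ℝ) : ℂ)) * star W :=
      cfc_spectral hM3 _
    have h0 : fidelity ρ σ = (msqrt M).trace.re := by rw [hMdef]; rfl
    rw [h0, hmsq, sum_one W _ hW1, Complex.ofReal_re]
  set Cm : Matrix m m ℂ := star U * V with hCdef
  set Amat : Matrix m m ℂ := diagonal (fun i => ((Real.sqrt (p i) : ℝ) : ℂ)) * Cm *
    diagonal (fun j => ((Real.sqrt (q j) : ℝ) : ℂ)) with hAdef
  have hXUAV : X = U * Amat * star V := by
    rw [hXdef, hRρ, hRσ, H, hAdef, hCdef]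
  have hdg : ∀ k, d k * g k = Real.sqrt (d k) := by
    intro k
    by_cases hk : d k = 0
    · simp [hgdef, hk]
    · have hdk : 0 < d k := lt_of_le_of_ne (hd k) (Ne.symm hk)
      have hsq : Real.sqrt (d k) ≠ 0 := ne_of_gt (Real.sqrt_pos.mpr hdk)
      simp only [hgdef, if_neg hk]
      field_simp
      rw [Real.sq_sqrt hdk.le]
  have t1 : (Φ * star Y).trace = ((∑ k, Real.sqrt (d k) : ℝ) : ℂ) := by
    rw [Matrix.trace_mul_comm]
    have h3 : star Y * Φ = diagonal (fun k => (d k:ℂ)) * diagonal (fun k => (g k:ℂ)) := by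
      rw [hΦdef, Matrix.star_eq_conjTranspose, ← Matrix.mul_assoc, hYY]
    rw [h3, diagonal_mul_diagonal, Matrix.trace_diagonal]
    push_cast
    refine Finset.sum_congr rfl fun k _ => ?_
    rw [← Complex.ofReal_mul, hdg]
  have hstarY : star Y = star W * X := by
    rw [hYdef, Matrix.star_mul, Matrix.star_eq_conjTranspose Xᴴ,
      Matrix.conjTranspose_conjTranspose]
  have t2 : star K * X = Φ * star Y := by
    rw [hstarK, hstarY, Matrix.mul_assoc]
  have t3 : (star K * X).trace = (star B * Amat).trace := by
    rw [hXUAV]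
    have h4 : star K * (U * Amat * star V) = (star K * (U * Amat)) * star V := by
      simp only [Matrix.mul_assoc]
    rw [h4, Matrix.trace_mul_cycle, hstarB]
    simp only [Matrix.mul_assoc]
  have keyid : (star B * Amat).trace = ((∑ k, Real.sqrt (d k) : ℝ) : ℂ) := by
    rw [← t3, t2, t1]
  have key2 : ∑ k, Real.sqrt (d k) = ∑ j, ∑ i, ((starRingEnd ℂ) (B i j) * Amat i j).re := by
    have h5 := congrArg Complex.re keyid
    rw [Complex.ofReal_re] at h5
    rw [← h5, Matrix.trace, Complex.re_sum]
    refine Finset.sum_congr rfl fun j _ => ?_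
    rw [Matrix.diag_apply, Matrix.mul_apply, Complex.re_sum]
    refine Finset.sum_congr rfl fun i _ => ?_
    rw [Matrix.star_apply, Complex.star_def]
  have hAentry : ∀ i j, Amat i j = ((Real.sqrt (p i) : ℝ) : ℂ) * Cm i j *
      ((Real.sqrt (q j) : ℝ) : ℂ) := by
    intro i j
    rw [hAdef, Matrix.mul_diagonal, Matrix.diagonal_mul]
  have hFnn : 0 ≤ fidelity ρ σ := by
    rw [hF]
    exact Finset.sum_nonneg fun k _ => Real.sqrt_nonneg _
  have hterm : ∀ i j, ((starRingEnd ℂ) (B i j) * Amat i j).re ≤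
      Real.sqrt (p i) * Real.sqrt (q j) * (‖Cm i j‖ * ‖B i j‖) := by
    intro i j
    refine (Complex.re_le_norm _).trans ?_
    rw [norm_mul, hAentry i j, norm_mul, norm_mul, Complex.norm_conj,
      Complex.norm_of_nonneg (Real.sqrt_nonneg (p i)),
      Complex.norm_of_nonneg (Real.sqrt_nonneg (q j))]
    apply le_of_eq
    ring
  set x : m × m → ℝ := fun z => (p z.1) ^ (s/2) * ((q z.2) ^ ((1-s)/2)) * ‖Cm z.1 z.2‖
    with hxdef
  set y : m × m → ℝ := fun z => (p z.1) ^ ((1-s)/2) * ((q z.2) ^ (s/2)) * ‖B z.1 z.2‖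
    with hydef
  have hsplit : ∀ (a : ℝ), 0 ≤ a → Real.sqrt a = a ^ (s/2) * a ^ ((1-s)/2) := by
    intro a ha
    have h12 : (1/2 : ℝ) = s/2 + (1-s)/2 := by ring
    rw [Real.sqrt_eq_rpow, h12, Real.rpow_add' ha (by rw [← h12]; norm_num)]
  have hxy : ∀ z : m × m, Real.sqrt (p z.1) * Real.sqrt (q z.2) *
      (‖Cm z.1 z.2‖ * ‖B z.1 z.2‖) = x z * y z := by
    intro z
    simp only [hxdef, hydef]
    rw [hsplit _ (hp _), hsplit _ (hq _)]
    ring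
  have hFle : fidelity ρ σ ≤ ∑ z : m × m, x z * y z := by
    rw [hF]
    calc (∑ k, Real.sqrt (d k))
        = ∑ j, ∑ i, ((starRingEnd ℂ) (B i j) * Amat i j).re := key2
      _ ≤ ∑ j, ∑ i, Real.sqrt (p i) * Real.sqrt (q j) *
            (‖Cm i j‖ * ‖B i j‖) :=
          Finset.sum_le_sum fun j _ => Finset.sum_le_sum fun i _ => hterm i j
      _ = ∑ i, ∑ j, Real.sqrt (p i) * Real.sqrt (q j) *
            (‖Cm i j‖ * ‖B i j‖) := Finset.sum_comm
      _ = ∑ z : m × m, x z * y z := by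
          rw [Fintype.sum_prod_type]
          exact Finset.sum_congr rfl fun i _ => Finset.sum_congr rfl fun j _ => hxy (i, j)
  have hCS := Finset.sum_mul_sq_le_sq_mul_sq Finset.univ x y
  have hmpρ : mpow ρ s = U * diagonal (fun i => ((p i ^ s : ℝ):ℂ)) * star U := cfc_spectral h1 _
  have hmpσ : mpow σ (1-s) = V * diagonal (fun j => ((q j ^ (1-s) : ℝ):ℂ)) * star V :=
    cfc_spectral h2 _
  have entry : ∀ jj, (star Cm * (diagonal (fun i => ((p i ^ s:ℝ):ℂ)) * Cm *
      diagonal (fun j => ((q j ^ (1-s):ℝ):ℂ)))) jj jj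
      = ∑ i, ((p i ^ s * q jj ^ (1-s) * normSq (Cm i jj) : ℝ) : ℂ) := by
    intro jj
    rw [Matrix.mul_apply]
    refine Finset.sum_congr rfl fun i _ => ?_
    rw [Matrix.mul_diagonal, Matrix.diagonal_mul, Matrix.star_apply, Complex.star_def]
    calc (starRingEnd ℂ) (Cm i jj) * ((p i ^ s : ℝ) * Cm i jj * (q jj ^ (1-s) : ℝ))
        = (p i ^ s : ℝ) * (q jj ^ (1-s) : ℝ) * (Cm i jj * (starRingEnd ℂ) (Cm i jj)) := by ring
      _ = ((p i ^ s * q jj ^ (1-s) * normSq (Cm i jj) : ℝ) : ℂ) := by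
          rw [Complex.mul_conj]
          push_cast
          ring
  have htr : ((mpow ρ s) * (mpow σ (1-s))).trace
      = ∑ jj, ∑ i, ((p i ^ s * q jj ^ (1-s) * normSq (Cm i jj) : ℝ) : ℂ) := by
    rw [hmpρ, hmpσ, H, ← hCdef, Matrix.trace_mul_cycle]
    have hVU : star V * U = star Cm := by rw [hCdef, Matrix.star_mul, star_star]
    rw [hVU]
    rw [Matrix.trace]
    exact Finset.sum_congr rfl fun jj _ => entry jj
  have hpow2 : ∀ (a : ℝ), 0 ≤ a → ∀ t : ℝ, (a ^ t)^2 = a ^ (2*t) := by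
    intro a ha t
    rw [← Real.rpow_natCast (a ^ t) 2, ← Real.rpow_mul ha]
    congr 1
    push_cast
    ring
  have hx2 : ∑ z : m × m, (x z)^2 = ((mpow ρ s) * (mpow σ (1-s))).trace.re := by
    have hre : ((mpow ρ s) * (mpow σ (1-s))).trace.re
        = ∑ jj, ∑ i, (p i ^ s * q jj ^ (1-s) * normSq (Cm i jj)) := by
      rw [htr, Complex.re_sum]
      refine Finset.sum_congr rfl fun jj _ => ?_
      rw [Complex.re_sum]
      exact Finset.sum_congr rfl fun i _ => Complex.ofReal_re _
    rw [hre]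
    rw [Fintype.sum_prod_type]
    rw [Finset.sum_comm]
    refine Finset.sum_congr rfl fun jj _ => Finset.sum_congr rfl fun i _ => ?_
    simp only [hxdef]
    rw [mul_pow, mul_pow, hpow2 _ (hp _), hpow2 _ (hq _), Complex.sq_norm]
    rw [show 2*(s/2) = s by ring, show 2*((1-s)/2) = 1-s by ring]
  have hysq : ∀ z : m × m, (y z)^2 = p z.1 ^ (1-s) * q z.2 ^ s * normSq (B z.1 z.2) := by
    intro z
    simp only [hydef]
    rw [mul_pow, mul_pow, hpow2 _ (hp _), hpow2 _ (hq _), Complex.sq_norm]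
    rw [show 2*(s/2) = s by ring, show 2*((1-s)/2) = 1-s by ring]
  have hy2 : ∑ z : m × m, (y z)^2 ≤ 1 := by
    have step1 : ∑ z : m × m, (y z)^2 ≤
        ∑ z : m × m, ((1-s) * p z.1 + s * q z.2) * normSq (B z.1 z.2) := by
      refine Finset.sum_le_sum fun z _ => ?_
      rw [hysq z]
      refine mul_le_mul_of_nonneg_right ?_ (normSq_nonneg _)
      exact Real.geom_mean_le_arith_mean2_weighted (by linarith) (le_of_lt hs0) (hp _) (hq _)
        (by ring)
    have split : ∑ z : m × m, ((1-s) * p z.1 + s * q z.2) * normSq (B z.1 z.2)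
        = (1-s) * ∑ i, p i * (∑ j, normSq (B i j)) + s * ∑ j, q j * (∑ i, normSq (B i j)) := by
      rw [Fintype.sum_prod_type]
      simp only [add_mul, Finset.sum_add_distrib, Finset.mul_sum, mul_assoc]
      congr 1
      exact Finset.sum_comm
    have bound1 : ∑ i, p i * (∑ j, normSq (B i j)) ≤ 1 := by
      calc ∑ i, p i * (∑ j, normSq (B i j)) ≤ ∑ i, p i * 1 :=
            Finset.sum_le_sum fun i _ => mul_le_mul_of_nonneg_left (hrow i) (hp i)
        _ = 1 := by simp [hptr]
    have bound2 : ∑ j, q j * (∑ i, normSq (B i j)) ≤ 1 := by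
      calc ∑ j, q j * (∑ i, normSq (B i j)) ≤ ∑ j, q j * 1 :=
            Finset.sum_le_sum fun j _ => mul_le_mul_of_nonneg_left (hcol j) (hq j)
        _ = 1 := by simp [hqtr]
    have h1s : (0:ℝ) ≤ 1 - s := by linarith
    calc ∑ z : m × m, (y z)^2 ≤ (1-s) * ∑ i, p i * (∑ j, normSq (B i j)) +
          s * ∑ j, q j * (∑ i, normSq (B i j)) := by rw [← split]; exact step1
      _ ≤ (1-s) * 1 + s * 1 := by
          refine add_le_add (mul_le_mul_of_nonneg_left bound1 h1s)
            (mul_le_mul_of_nonneg_left bound2 (le_of_lt hs0))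
      _ = 1 := by ring
  calc fidelity ρ σ ^ 2 ≤ (∑ z : m × m, x z * y z)^2 := pow_le_pow_left₀ hFnn hFle 2
    _ ≤ (∑ z : m × m, (x z)^2) * (∑ z : m × m, (y z)^2) := hCS
    _ ≤ (∑ z : m × m, (x z)^2) * 1 :=
        mul_le_mul_of_nonneg_left hy2 (Finset.sum_nonneg fun z _ => sq_nonneg _)
    _ = ((mpow ρ s) * (mpow σ (1-s))).trace.re := by rw [mul_one, hx2]

theorem nqcd_ge_fidelity_sq (ρ σ : Matrix m m ℂ) (hρ : IsDensity ρ) (hσ : IsDensity σ) :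
    (fidelity ρ σ) ^ 2 ≤ NQCD ρ σ ∧ ∀ t : ℝ, t < (fidelity ρ σ) ^ 2 → t < NQCD ρ σ := by
  haveI h0 : Nonempty (Set.Ioo (0:ℝ) 1) := ⟨⟨1/2, by norm_num, by norm_num⟩⟩
  have key : ∀ z : Set.Ioo (0:ℝ) 1,
      (fidelity ρ σ)^2 ≤ ((mpow ρ (z:ℝ)) * (mpow σ (1 - (z:ℝ)))).trace.re := by
    rintro ⟨z, hz1, hz2⟩
    exact fid_sq_le_term ρ σ hρ hσ hz1 hz2
  have h : (fidelity ρ σ)^2 ≤ NQCD ρ σ := le_ciInf key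
  exact ⟨h, fun t ht => lt_of_lt_of_le ht h⟩
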